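/- For each j ∈ {1,…,n}, the vector polynomial q_j is a j-th generator of the interpolation set 𝕊 = 𝕊({σ_k}_{k=1}^N, {x_k}_{k=1}^N): q_j is a nonzero element of 𝕊 ∖ (𝕄(q_1)+⋯+𝕄(q_{j−1})) (of 𝕊 itself when j = 1) and its height is minimal among the nonzero elements of that set. -/

import Mathlib

open Polynomial Matrix

/-- The height of an `n`-dimensional vector polynomial. -/
noncomputable def vheight (n : ℕ) (r : Fin n → Polynomial ℂ) : WithBot ℕ :=
  Finset.univ.sup fun j : Fin n => n • (r j).degree + ((j : ℕ) : WithBot ℕ)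

/-- The class `𝓜(n,N)` of band symmetric matrices with degeneration indices `m`. -/
structure MatrixClassM (n N : ℕ) (A : Matrix (Fin N) (Fin N) ℝ) (m : ℕ → ℕ) : Prop where
  symm : A.IsSymm
  band : ∀ k l : Fin N, (n : ℤ) < |(k : ℤ) - (l : ℤ)| → A k l = 0
  m_zero : m 0 = 0
  m_last : m n = N
  m_mono : ∀ j < n, m j < m (j + 1)
  m_one : 1 < m 1
  m_le : ∀ j, 1 ≤ j → j ≤ n → m j ≤ N - n + j
  d_pos : ∀ j < n, ∀ k l : Fin N, (l : ℕ) = (k : ℕ) + (n - j) →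
      m j < (k : ℕ) + 1 → (k : ℕ) + 1 < m (j + 1) → 0 < A l k
  d_zero : ∀ j < n, ∀ k l : Fin N, (l : ℕ) = (k : ℕ) + (n - j) →
      m (j + 1) ≤ (k : ℕ) + 1 → (k : ℕ) + 1 ≤ N - n + j → A l k = 0

/-- The rank-one jump matrix `σ_k`. -/
def sigmaJump {n N : ℕ} (αc : Fin N → Fin n → ℂ) (k : Fin N) :
    Matrix (Fin n) (Fin n) ℂ :=
  Matrix.of fun i j => (starRingEnd ℂ) (αc k i) * αc k j

/-- The inner product `⟨r,s⟩_{L²(σ)}` for vector polynomials. -/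
noncomputable def L2inner {n N : ℕ} (x : Fin N → ℝ)
    (σ : Fin N → Matrix (Fin n) (Fin n) ℂ) (r s : Fin n → Polynomial ℂ) : ℂ :=
  ∑ k, ∑ i, ∑ j,
    (starRingEnd ℂ) ((r i).eval ((x k : ℂ))) * σ k i j * (s j).eval ((x k : ℂ))

/-- The interpolation set `𝕊`. -/
def interpSet {n N : ℕ} (z : Fin N → ℂ) (α : Fin N → Fin n → ℂ) :
    Set (Fin n → Polynomial ℂ) :=
  {r | ∀ k, ∑ j, α k j * (r j).eval (z k) = 0}

/-- `𝕄(r_1) + ⋯ + 𝕄(r_m)`. -/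
def polySpan {n m : ℕ} (r : Fin m → Fin n → Polynomial ℂ) :
    Set (Fin n → Polynomial ℂ) :=
  {s | ∃ c : Fin m → Polynomial ℂ, s = fun jj => ∑ i, c i * r i jj}

/-- `𝕄(r_1) + ⋯ + 𝕄(r_{j-1})`. -/
def prevSpan {n : ℕ} (r : Fin n → Fin n → Polynomial ℂ) (j : Fin n) :
    Set (Fin n → Polynomial ℂ) :=
  {s | ∃ c : Fin n → Polynomial ℂ,
      s = fun jj => ∑ i ∈ Finset.univ.filter (fun i => i < j), c i * r i jj}

/-- `r` is a sequence of generators of `S`. -/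
def IsGenSeq {n : ℕ} (S : Set (Fin n → Polynomial ℂ))
    (r : Fin n → Fin n → Polynomial ℂ) : Prop :=
  ∀ j : Fin n, r j ≠ 0 ∧ r j ∈ S \ prevSpan r j ∧
    ∀ s ∈ S \ prevSpan r j, s ≠ 0 → vheight n (r j) ≤ vheight n s

namespace Stmt14Aux

def sfun (n : ℕ) (m : ℕ → ℕ) (j : ℕ) : ℕ := m j + (n - j)
def jjf (n : ℕ) (m : ℕ → ℕ) (c : ℕ) : ℕ :=
  Nat.findGreatest (fun j => sfun n m j ≤ c) (n - 1)
def kkf (n : ℕ) (m : ℕ → ℕ) (c : ℕ) : ℕ := c - (n - jjf n m c)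
def hhf (n : ℕ) (m : ℕ → ℕ) (c : ℕ) : ℕ :=
  if c < n ∨ c = 0 then c
  else hhf n m (min (kkf n m c) (c - 1)) + n
termination_by c
decreasing_by omega

lemma jjf_le (n : ℕ) (m : ℕ → ℕ) (c : ℕ) : jjf n m c ≤ n - 1 :=
  Nat.findGreatest_le _
lemma kkf_lt (n : ℕ) (m : ℕ → ℕ) {c : ℕ} (hn : 0 < n) (hc : n ≤ c) :
    kkf n m c < c := by
  have h1 := jjf_le n m c
  have : 0 < n - jjf n m c := by omega
  unfold kkf; omega
lemma hhf_eq_of_lt {n : ℕ} {m : ℕ → ℕ} {c : ℕ} (h : c < n) : hhf n m c = c := by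
  rw [hhf]; simp [h]
lemma hhf_rec {n : ℕ} {m : ℕ → ℕ} {c : ℕ} (hn : 0 < n) (hc : n ≤ c) :
    hhf n m c = hhf n m (kkf n m c) + n := by
  rw [hhf]
  have h1 : ¬ (c < n ∨ c = 0) := by omega
  rw [if_neg h1]
  congr 2
  have := kkf_lt n m hn hc
  omega
lemma hhf_ge {n : ℕ} {m : ℕ → ℕ} {c : ℕ} (hn : 0 < n) (hc : n ≤ c) :
    n ≤ hhf n m c := by
  rw [hhf_rec hn hc]; omega

variable {n N : ℕ} {A : Matrix (Fin N) (Fin N) ℝ} {m : ℕ → ℕ}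

lemma m_step (hA : MatrixClassM n N A m) :
    ∀ b, b ≤ n → ∀ a, a ≤ b → m a + (b - a) ≤ m b := by
  intro b
  induction b with
  | zero =>
    intro _ a ha
    have ha0 : a = 0 := by omega
    subst ha0
    omega
  | succ b ih =>
    intro hb a ha
    rcases Nat.eq_or_lt_of_le ha with h | h
    · subst h; omega
    · have h1 := ih (by omega) a (by omega)
      have h2 := hA.m_mono b (by omega)
      omega

lemma m_mono_le (hA : MatrixClassM n N A m) {a b : ℕ} (hab : a ≤ b) (hb : b ≤ n) :
    m a ≤ m b := by have := m_step hA b hb a hab; omega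

lemma m_mono_lt (hA : MatrixClassM n N A m) {a b : ℕ} (hab : a < b) (hb : b ≤ n) :
    m a < m b := by have := m_step hA b hb a (by omega); omega

lemma sfun_mono (hA : MatrixClassM n N A m) {a b : ℕ} (hab : a ≤ b) (hb : b ≤ n) :
    sfun n m a ≤ sfun n m b := by
  have := m_step hA b hb a hab; unfold sfun; omega

lemma sfun_zero (hA : MatrixClassM n N A m) : sfun n m 0 = n := by
  unfold sfun; rw [hA.m_zero]; omega

lemma sfun_n (hA : MatrixClassM n N A m) : sfun n m n = N := by
  unfold sfun; rw [hA.m_last]; omega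

lemma jjf_spec (hA : MatrixClassM n N A m) {c : ℕ} (hc : n ≤ c) :
    sfun n m (jjf n m c) ≤ c := by
  have h0 : sfun n m 0 ≤ c := by rw [sfun_zero hA]; omega
  unfold jjf
  exact Nat.findGreatest_spec (P := fun j => sfun n m j ≤ c) (Nat.zero_le _) h0

lemma jjf_lt_n {c : ℕ} (hn : 0 < n) : jjf n m c < n := by
  have := jjf_le n m c; omega

lemma lt_sfun_succ (hA : MatrixClassM n N A m) (hn : 0 < n) {c : ℕ} (hc : n ≤ c) (hcN : c < N) :
    c < sfun n m (jjf n m c + 1) := by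
  by_cases h : jjf n m c + 1 ≤ n - 1
  · by_contra hcon
    push_neg at hcon
    exact Nat.findGreatest_is_greatest (P := fun j => sfun n m j ≤ c)
      (by unfold jjf; omega) h hcon
  · have h1 := jjf_le n m c
    have h2 : jjf n m c + 1 = n := by omega
    rw [h2, sfun_n hA]; exact hcN

lemma kkf_add (hA : MatrixClassM n N A m) (hn : 0 < n) {c : ℕ} (hc : n ≤ c) :
    kkf n m c + (n - jjf n m c) = c := by
  have h1 := jjf_spec hA hc
  have h2 : jjf n m c < n := jjf_lt_n hn
  unfold sfun at h1
  unfold kkf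
  omega

lemma m_jjf_le_kkf (hA : MatrixClassM n N A m) (hn : 0 < n) {c : ℕ} (hc : n ≤ c) :
    m (jjf n m c) ≤ kkf n m c := by
  have h1 := jjf_spec hA hc
  have h2 : jjf n m c < n := jjf_lt_n hn
  unfold sfun at h1; unfold kkf; omega

lemma kkf_succ_lt (hA : MatrixClassM n N A m) (hn : 0 < n) {c : ℕ}
    (hc : n ≤ c) (hcN : c < N) :
    kkf n m c + 1 < m (jjf n m c + 1) := by
  have h1 := lt_sfun_succ hA hn hc hcN
  have h2 : jjf n m c < n := jjf_lt_n hn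
  have h3 := kkf_add hA hn hc
  unfold sfun at h1
  omega

lemma kkf_nonexc (hA : MatrixClassM n N A m) (hn : 0 < n) {c : ℕ}
    (hc : n ≤ c) (hcN : c < N) :
    ∀ i, 1 ≤ i → i ≤ n → m i ≠ kkf n m c + 1 := by
  intro i h1 h2
  have hj : jjf n m c < n := jjf_lt_n hn
  by_cases h : i ≤ jjf n m c
  · have ha := m_mono_le hA h (by omega)
    have hb := m_jjf_le_kkf hA hn hc
    omega
  · have ha := m_mono_le hA (show jjf n m c + 1 ≤ i by omega) h2
    have hb := kkf_succ_lt hA hn hc hcN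
    omega

lemma jjf_mono {c c' : ℕ} (hcc : c ≤ c') : jjf n m c ≤ jjf n m c' := by
  rcases Nat.eq_zero_or_pos (jjf n m c) with h | h
  · omega
  · have h0 := (Nat.findGreatest_eq_iff (P := fun j => sfun n m j ≤ c)
      (k := n - 1) (m := jjf n m c)).mp rfl
    have hsp : sfun n m (jjf n m c) ≤ c := h0.2.1 (by omega)
    exact Nat.le_findGreatest (jjf_le n m c) (le_trans hsp hcc)

lemma kkf_mono (hA : MatrixClassM n N A m) (hn : 0 < n) {c c' : ℕ}
    (hc : n ≤ c) (hcc : c < c') :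
    kkf n m c < kkf n m c' := by
  have h1 := kkf_add hA hn hc
  have h2 := kkf_add hA hn (show n ≤ c' by omega)
  have h3 := jjf_mono (n := n) (m := m) (le_of_lt hcc)
  have h4 : jjf n m c' < n := jjf_lt_n hn
  omega

lemma hhf_lt_hhf (hA : MatrixClassM n N A m) (hn : 0 < n) :
    ∀ c', ∀ c, c < c' → hhf n m c < hhf n m c' := by
  intro c'
  induction c' using Nat.strong_induction_on with
  | _ c' ih =>
    intro c hcc
    by_cases h1 : c' < n
    · rw [hhf_eq_of_lt (lt_trans hcc h1), hhf_eq_of_lt h1]; exact hcc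
    · push_neg at h1
      rw [hhf_rec hn h1]
      by_cases h2 : c < n
      · have : hhf n m c = c := hhf_eq_of_lt h2
        omega
      · push_neg at h2
        rw [hhf_rec hn h2]
        have hkmono := kkf_mono hA hn h2 hcc
        have := ih (kkf n m c') (kkf_lt n m hn h1) (kkf n m c) hkmono
        omega

lemma hhf_le_hhf (hA : MatrixClassM n N A m) (hn : 0 < n) {c c' : ℕ}
    (h : c ≤ c') : hhf n m c ≤ hhf n m c' := by
  rcases Nat.eq_or_lt_of_le h with h | h
  · subst h; rfl
  · exact le_of_lt (hhf_lt_hhf hA hn c' c h)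

lemma hhf_inj (hA : MatrixClassM n N A m) (hn : 0 < n) {c c' : ℕ}
    (h : hhf n m c = hhf n m c') : c = c' := by
  rcases lt_trichotomy c c' with hl | he | hl
  · have := hhf_lt_hhf hA hn c' c hl; omega
  · exact he
  · have := hhf_lt_hhf hA hn c c' hl; omega

lemma pivot_pos (hA : MatrixClassM n N A m) (hn : 0 < n) {c : ℕ}
    (hc : n ≤ c) (hcN : c < N) (hkN : kkf n m c < N) :
    0 < A ⟨c, hcN⟩ ⟨kkf n m c, hkN⟩ := by
  apply hA.d_pos (jjf n m c) (jjf_lt_n hn) ⟨kkf n m c, hkN⟩ ⟨c, hcN⟩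
  · simp [kkf_add hA hn hc]
  · simp; have := m_jjf_le_kkf hA hn hc; omega
  · simp; exact kkf_succ_lt hA hn hc hcN

lemma pivot_ne (hA : MatrixClassM n N A m) (hn : 0 < n) {c : ℕ}
    (hc : n ≤ c) (hcN : c < N) (hkN : kkf n m c < N) :
    A ⟨kkf n m c, hkN⟩ ⟨c, hcN⟩ ≠ 0 := by
  rw [hA.symm.apply]
  exact ne_of_gt (pivot_pos hA hn hc hcN hkN)

lemma above_zero (hA : MatrixClassM n N A m) (hn : 0 < n) (hnN : n < N) {c : ℕ}
    (hc : n ≤ c) (hcN : c < N) (hkN : kkf n m c < N) (l : Fin N) (hl : c < (l : ℕ)) :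
    A ⟨kkf n m c, hkN⟩ l = 0 := by
  set k := kkf n m c with hkdef
  have hadd := kkf_add hA hn hc
  have hjn : jjf n m c < n := jjf_lt_n hn
  have hkl : k < (l : ℕ) := by omega
  by_cases hb : n < (l : ℕ) - k
  · apply hA.band
    have h1 : ((⟨k, hkN⟩ : Fin N) : ℤ) = (k : ℤ) := rfl
    have h2 : ((l : Fin N) : ℤ) = ((l : ℕ) : ℤ) := rfl
    rw [h1, h2, abs_sub_comm, abs_of_nonneg (by omega : (0:ℤ) ≤ ((l:ℕ):ℤ) - (k:ℤ))]
    omega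
  · push_neg at hb
    set e := (l : ℕ) - k with hedef
    have he1 : 1 ≤ e := by omega
    have hen : e ≤ n := hb
    rw [hA.symm.apply]
    apply hA.d_zero (n - e) (by omega) ⟨k, hkN⟩ l
    · simp; omega
    · have h3 : n - e + 1 ≤ jjf n m c := by omega
      have h4 := m_mono_le hA h3 (by omega)
      have h5 := m_jjf_le_kkf hA hn hc
      simp; omega
    · have h6 : (l : ℕ) < N := l.isLt
      simp; omega

lemma exc_lt (hA : MatrixClassM n N A m) (hn : 0 < n) {i0 : ℕ} (hi : i0 < n) :
    2 ≤ m (i0 + 1) ∧ m (i0 + 1) ≤ N := by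
  constructor
  · have := m_mono_le hA (show 1 ≤ i0 + 1 by omega) (by omega)
    have := hA.m_one; omega
  · have := m_mono_le hA (show i0 + 1 ≤ n by omega) (le_refl n)
    rw [hA.m_last] at this; exact this

lemma exc_above_zero (hA : MatrixClassM n N A m) (hn : 0 < n) (hnN : n < N)
    {i0 : ℕ} (hi : i0 < n) (hkiN : m (i0 + 1) - 1 < N) (l : Fin N)
    (hl : m (i0 + 1) - 1 + (n - (i0 + 1)) < (l : ℕ)) :
    A ⟨m (i0 + 1) - 1, hkiN⟩ l = 0 := by
  have hMi := exc_lt hA hn hi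
  set ki := m (i0 + 1) - 1 with hkidef
  have hkl : ki < (l : ℕ) := by omega
  by_cases hb : n < (l : ℕ) - ki
  · apply hA.band
    have h1 : ((⟨ki, hkiN⟩ : Fin N) : ℤ) = (ki : ℤ) := rfl
    have h2 : ((l : Fin N) : ℤ) = ((l : ℕ) : ℤ) := rfl
    rw [h1, h2, abs_sub_comm, abs_of_nonneg (by omega : (0:ℤ) ≤ ((l:ℕ):ℤ) - (ki:ℤ))]
    omega
  · push_neg at hb
    set e := (l : ℕ) - ki with hedef
    have he1 : n - i0 ≤ e := by omega
    have hen : e ≤ n := hb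
    rw [hA.symm.apply]
    apply hA.d_zero (n - e) (by omega) ⟨ki, hkiN⟩ l
    · simp; omega
    · have h3 : n - e + 1 ≤ i0 + 1 := by omega
      have h4 := m_mono_le hA h3 (by omega)
      simp; omega
    · have h6 : (l : ℕ) < N := l.isLt
      simp; omega

lemma jjf_cq_le (hA : MatrixClassM n N A m) (hn : 0 < n) {i0 : ℕ} (hi : i0 < n)
    (hcq : n ≤ m (i0 + 1) - 1 + (n - (i0 + 1))) :
    jjf n m (m (i0 + 1) - 1 + (n - (i0 + 1))) ≤ i0 := by
  have hMi := exc_lt hA hn hi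
  set cq := m (i0 + 1) - 1 + (n - (i0 + 1)) with hcqdef
  by_contra hcon
  push_neg at hcon
  have h1 := jjf_spec hA hcq
  have h2 : jjf n m cq < n := jjf_lt_n hn
  have h3 := sfun_mono hA (show i0 + 1 ≤ jjf n m cq by omega) (by omega)
  unfold sfun at h1 h3
  omega

lemma hh_cq_lt (hA : MatrixClassM n N A m) (hn : 0 < n) {i0 : ℕ} (hi : i0 < n) :
    hhf n m (m (i0 + 1) - 1 + (n - (i0 + 1))) < hhf n m (m (i0 + 1) - 1) + n := by
  have hMi := exc_lt hA hn hi
  set cq := m (i0 + 1) - 1 + (n - (i0 + 1)) with hcqdef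
  set ki := m (i0 + 1) - 1 with hkidef
  by_cases hcqn : cq < n
  · rw [hhf_eq_of_lt hcqn]; omega
  · push_neg at hcqn
    rw [hhf_rec hn hcqn]
    have h1 : jjf n m cq ≤ i0 := jjf_cq_le hA hn hi hcqn
    have h2 := kkf_add hA hn hcqn
    have h3 : kkf n m cq < ki := by omega
    have h4 := hhf_lt_hhf hA hn ki (kkf n m cq) h3
    omega

lemma phi_main {T : Matrix (Fin n) (Fin n) ℝ} {φ : Fin n → Fin N → Polynomial ℂ}
    (hn : 0 < n) (hnN : n < N) (hA : MatrixClassM n N A m)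
    (hT_upper : ∀ i j : Fin n, j < i → T i j = 0)
    (hT_diag : ∀ j : Fin n, T j j ≠ 0)
    (hφ_init : ∀ (j : Fin n) (i : Fin n),
      φ j (Fin.castLE (le_of_lt hnN) i) = C ((T j i : ℂ)))
    (hφ_rec : ∀ (j : Fin n) (k : Fin N),
      (∀ i, 1 ≤ i → i ≤ n → m i ≠ (k : ℕ) + 1) →
      ∑ l, C ((A k l : ℂ)) * φ j l = X * φ j k) :
    ∀ c, ∀ (hc : c < N),
    (∀ (t : Fin n) (d : ℕ), hhf n m c < n * d + (t : ℕ) → (φ t ⟨c, hc⟩).coeff d = 0)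
    ∧ (∀ t : Fin n, (t : ℕ) = hhf n m c % n →
        (φ t ⟨c, hc⟩).coeff (hhf n m c / n) ≠ 0) := by
  intro c
  induction c using Nat.strong_induction_on with
  | _ c ih =>
    intro hc
    by_cases hcn : c < n
    · -- base case
      have hhc : hhf n m c = c := hhf_eq_of_lt hcn
      have hφc : ∀ t : Fin n, φ t ⟨c, hc⟩ = C ((T t ⟨c, hcn⟩ : ℂ)) := by
        intro t
        exact hφ_init t ⟨c, hcn⟩
      constructor
      · intro t d hd
        rw [hφc t, coeff_C]
        rw [hhc] at hd
        by_cases hd0 : d = 0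
        · subst hd0
          simp only [if_pos rfl]
          have htc : (⟨c, hcn⟩ : Fin n) < t := by
            rw [Fin.lt_def]; simp; omega
          rw [hT_upper t ⟨c, hcn⟩ htc]
          simp
        · simp [hd0]
      · intro t ht
        rw [hhc] at ht ⊢
        rw [Nat.mod_eq_of_lt hcn] at ht
        rw [Nat.div_eq_of_lt hcn]
        rw [hφc t, coeff_C]
        simp only [if_pos rfl]
        have htc : t = ⟨c, hcn⟩ := Fin.ext ht
        rw [htc]
        exact Complex.ofReal_ne_zero.mpr (hT_diag _)
    · push_neg at hcn
      have hkc : kkf n m c < c := kkf_lt n m hn hcn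
      have hkN : kkf n m c < N := lt_trans hkc hc
      set k := kkf n m c with hkdef
      have hkne := kkf_nonexc hA hn hcn hc
      have hEq : ∀ (t : Fin n) (d : ℕ),
          (∑ l : Fin N, ((A ⟨k, hkN⟩ l : ℂ)) * (φ t l).coeff d)
            = (X * φ t ⟨k, hkN⟩).coeff d := by
        intro t d
        have h0 := hφ_rec t ⟨k, hkN⟩ (by simpa using hkne)
        have h1 := congrArg (fun p => p.coeff d) h0
        simpa [finset_sum_coeff, coeff_C_mul] using h1
      have hsplit : ∀ (t : Fin n) (d : ℕ),
          ((A ⟨k, hkN⟩ ⟨c, hc⟩ : ℂ)) * (φ t ⟨c, hc⟩).coeff d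
            = (X * φ t ⟨k, hkN⟩).coeff d
              - ∑ l ∈ Finset.univ.erase (⟨c, hc⟩ : Fin N),
                  ((A ⟨k, hkN⟩ l : ℂ)) * (φ t l).coeff d := by
        intro t d
        have h2 := Finset.sum_erase_add Finset.univ
          (fun l => ((A ⟨k, hkN⟩ l : ℂ)) * (φ t l).coeff d)
          (Finset.mem_univ (⟨c, hc⟩ : Fin N))
        have h3 := hEq t d
        rw [← h3, ← h2]; ring
      have hvan : ∀ (t : Fin n) (d : ℕ), hhf n m c ≤ n * d + (t : ℕ) →
          ∀ l ∈ Finset.univ.erase (⟨c, hc⟩ : Fin N),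
            ((A ⟨k, hkN⟩ l : ℂ)) * (φ t l).coeff d = 0 := by
        intro t d hd l hl
        have hlne : (l : ℕ) ≠ c := by
          intro hvv
          exact (Finset.mem_erase.mp hl).1 (Fin.ext hvv)
        rcases lt_or_gt_of_ne hlne with h | h
        · have hhl : hhf n m (l : ℕ) < hhf n m c := hhf_lt_hhf hA hn c (l : ℕ) h
          have h5 := (ih (l : ℕ) h l.isLt).1 t d (by omega)
          rw [Fin.eta] at h5
          rw [h5, mul_zero]
        · rw [above_zero hA hn hnN hcn hc hkN l h]
          simp
      have hpiv : ((A ⟨k, hkN⟩ ⟨c, hc⟩ : ℝ) : ℂ) ≠ 0 :=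
        Complex.ofReal_ne_zero.mpr (pivot_ne hA hn hcn hc hkN)
      have hhk : hhf n m c = hhf n m k + n := hhf_rec hn hcn
      constructor
      · intro t d hd
        have h1 := hsplit t d
        rw [Finset.sum_eq_zero (hvan t d (le_of_lt hd)), sub_zero] at h1
        have hX : (X * φ t ⟨k, hkN⟩).coeff d = 0 := by
          cases d with
          | zero => rw [mul_coeff_zero, coeff_X_zero, zero_mul]
          | succ d' =>
            rw [coeff_X_mul]
            refine (ih k hkc hkN).1 t d' ?_
            have hmul : n * (d' + 1) = n * d' + n := by ring
            omega
        rw [hX] at h1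
        rcases mul_eq_zero.mp h1 with h | h
        · exact absurd h hpiv
        · exact h
      · intro t ht
        have hdiv : hhf n m c / n = hhf n m k / n + 1 := by
          rw [hhk]; exact Nat.add_div_right _ hn
        have hmod : hhf n m c % n = hhf n m k % n := by
          rw [hhk]; exact Nat.add_mod_right _ _
        have h1 := hsplit t (hhf n m c / n)
        have hst : hhf n m c ≤ n * (hhf n m c / n) + (t : ℕ) := by
          have := Nat.div_add_mod (hhf n m c) n
          omega
        rw [Finset.sum_eq_zero (hvan t _ hst), sub_zero] at h1
        rw [hdiv, coeff_X_mul] at h1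
        have hprev := (ih k hkc hkN).2 t (by rw [ht, hmod])
        intro hcon
        rw [hdiv] at hcon
        rw [hcon, mul_zero] at h1
        exact hprev h1.symm

section Qlemmas

variable {T : Matrix (Fin n) (Fin n) ℝ} {φ : Fin n → Fin N → Polynomial ℂ}
  {Q : Fin n → Fin n → Polynomial ℂ}

/-- the exceptional row for index `i` is `< N`. -/
lemma ki_lt (hA : MatrixClassM n N A m) (hn : 0 < n) {i0 : ℕ} (hi : i0 < n) :
    m (i0 + 1) - 1 < N := by
  have := exc_lt hA hn hi; omega

lemma q_coeff_eq
    (hn : 0 < n) (hnN : n < N) (hA : MatrixClassM n N A m)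
    (hQ : ∀ (j i : Fin n) (k : Fin N), (k : ℕ) + 1 = m ((i : ℕ) + 1) →
      Q j i = X * φ j k - ∑ l, C ((A k l : ℂ)) * φ j l)
    (i : Fin n) (t : Fin n) (d : ℕ) :
    (Q t i).coeff d
      = (X * φ t ⟨m ((i : ℕ) + 1) - 1, ki_lt hA hn i.isLt⟩).coeff d
        - ∑ l : Fin N,
            ((A ⟨m ((i : ℕ) + 1) - 1, ki_lt hA hn i.isLt⟩ l : ℂ)) * (φ t l).coeff d := by
  have hMi := exc_lt hA hn i.isLt
  have hq := hQ t i ⟨m ((i : ℕ) + 1) - 1, ki_lt hA hn i.isLt⟩ (by simp; omega)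
  rw [hq]
  simp [coeff_sub, finset_sum_coeff, coeff_C_mul]

lemma q_term_vanish
    (hn : 0 < n) (hnN : n < N) (hA : MatrixClassM n N A m)
    (hT_upper : ∀ i j : Fin n, j < i → T i j = 0)
    (hT_diag : ∀ j : Fin n, T j j ≠ 0)
    (hφ_init : ∀ (j : Fin n) (i : Fin n),
      φ j (Fin.castLE (le_of_lt hnN) i) = C ((T j i : ℂ)))
    (hφ_rec : ∀ (j : Fin n) (k : Fin N),
      (∀ i, 1 ≤ i → i ≤ n → m i ≠ (k : ℕ) + 1) →
      ∑ l, C ((A k l : ℂ)) * φ j l = X * φ j k)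
    (i : Fin n) (t : Fin n) (d : ℕ)
    (hd : hhf n m (m ((i : ℕ) + 1) - 1) + n ≤ n * d + (t : ℕ)) :
    ∀ l : Fin N,
      ((A ⟨m ((i : ℕ) + 1) - 1, ki_lt hA hn i.isLt⟩ l : ℂ)) * (φ t l).coeff d = 0 := by
  intro l
  by_cases hl : m ((i : ℕ) + 1) - 1 + (n - ((i : ℕ) + 1)) < (l : ℕ)
  · rw [exc_above_zero hA hn hnN i.isLt (ki_lt hA hn i.isLt) l hl]
    simp
  · push_neg at hl
    have h1 : hhf n m (l : ℕ) ≤ hhf n m (m ((i : ℕ) + 1) - 1 + (n - ((i : ℕ) + 1))) :=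
      hhf_le_hhf hA hn hl
    have h2 := hh_cq_lt hA hn i.isLt
    have h5 := (phi_main hn hnN hA hT_upper hT_diag hφ_init hφ_rec
      (l : ℕ) l.isLt).1 t d (by omega)
    rw [Fin.eta] at h5
    rw [h5, mul_zero]

lemma q_vanish
    (hn : 0 < n) (hnN : n < N) (hA : MatrixClassM n N A m)
    (hT_upper : ∀ i j : Fin n, j < i → T i j = 0)
    (hT_diag : ∀ j : Fin n, T j j ≠ 0)
    (hφ_init : ∀ (j : Fin n) (i : Fin n),
      φ j (Fin.castLE (le_of_lt hnN) i) = C ((T j i : ℂ)))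
    (hφ_rec : ∀ (j : Fin n) (k : Fin N),
      (∀ i, 1 ≤ i → i ≤ n → m i ≠ (k : ℕ) + 1) →
      ∑ l, C ((A k l : ℂ)) * φ j l = X * φ j k)
    (hQ : ∀ (j i : Fin n) (k : Fin N), (k : ℕ) + 1 = m ((i : ℕ) + 1) →
      Q j i = X * φ j k - ∑ l, C ((A k l : ℂ)) * φ j l)
    (i : Fin n) (t : Fin n) (d : ℕ)
    (hd : hhf n m (m ((i : ℕ) + 1) - 1) + n < n * d + (t : ℕ)) :
    (Q t i).coeff d = 0 := by
  rw [q_coeff_eq hn hnN hA hQ]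
  rw [Finset.sum_eq_zero (fun l _ => q_term_vanish hn hnN hA hT_upper hT_diag
    hφ_init hφ_rec i t d (le_of_lt hd) l), sub_zero]
  cases d with
  | zero => rw [mul_coeff_zero, coeff_X_zero, zero_mul]
  | succ d' =>
    rw [coeff_X_mul]
    refine (phi_main hn hnN hA hT_upper hT_diag hφ_init hφ_rec
      (m ((i : ℕ) + 1) - 1) (ki_lt hA hn i.isLt)).1 t d' ?_
    have hmul : n * (d' + 1) = n * d' + n := by ring
    omega

lemma q_lead
    (hn : 0 < n) (hnN : n < N) (hA : MatrixClassM n N A m)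
    (hT_upper : ∀ i j : Fin n, j < i → T i j = 0)
    (hT_diag : ∀ j : Fin n, T j j ≠ 0)
    (hφ_init : ∀ (j : Fin n) (i : Fin n),
      φ j (Fin.castLE (le_of_lt hnN) i) = C ((T j i : ℂ)))
    (hφ_rec : ∀ (j : Fin n) (k : Fin N),
      (∀ i, 1 ≤ i → i ≤ n → m i ≠ (k : ℕ) + 1) →
      ∑ l, C ((A k l : ℂ)) * φ j l = X * φ j k)
    (hQ : ∀ (j i : Fin n) (k : Fin N), (k : ℕ) + 1 = m ((i : ℕ) + 1) →
      Q j i = X * φ j k - ∑ l, C ((A k l : ℂ)) * φ j l)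
    (i : Fin n) (t : Fin n)
    (ht : (t : ℕ) = hhf n m (m ((i : ℕ) + 1) - 1) % n) :
    (Q t i).coeff (hhf n m (m ((i : ℕ) + 1) - 1) / n + 1) ≠ 0 := by
  set hki := hhf n m (m ((i : ℕ) + 1) - 1) with hhkidef
  have hst : hki + n ≤ n * (hki / n + 1) + (t : ℕ) := by
    have h0 := Nat.div_add_mod hki n
    have hmul : n * (hki / n + 1) = n * (hki / n) + n := by ring
    omega
  rw [q_coeff_eq hn hnN hA hQ]
  rw [Finset.sum_eq_zero (fun l _ => q_term_vanish hn hnN hA hT_upper hT_diag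
    hφ_init hφ_rec i t _ hst l), sub_zero]
  rw [coeff_X_mul]
  exact (phi_main hn hnN hA hT_upper hT_diag hφ_init hφ_rec
    (m ((i : ℕ) + 1) - 1) (ki_lt hA hn i.isLt)).2 t ht

end Qlemmas

lemma chainA (hA : MatrixClassM n N A m) (hn : 0 < n) :
    ∀ c', c' < N → ∀ vv, vv % n = hhf n m c' % n → vv < hhf n m c' →
    ∃ c'', n ≤ c'' ∧ c'' < N ∧ hhf n m (kkf n m c'') = vv := by
  intro c'
  induction c' using Nat.strong_induction_on with
  | _ c' ih =>
    intro hc' vv hmod hlt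
    by_cases h1 : c' < n
    · exfalso
      rw [hhf_eq_of_lt h1] at hmod hlt
      rw [Nat.mod_eq_of_lt h1] at hmod
      have : vv % n ≤ vv := Nat.mod_le _ _
      omega
    · push_neg at h1
      have hrec : hhf n m c' = hhf n m (kkf n m c') + n := hhf_rec hn h1
      by_cases h2 : vv = hhf n m (kkf n m c')
      · exact ⟨c', h1, hc', h2.symm⟩
      · have hkc := kkf_lt n m hn h1
        have hmod2 : vv % n = hhf n m (kkf n m c') % n := by
          rw [hmod, hrec, Nat.add_mod_right]
        apply ih (kkf n m c') hkc (lt_trans hkc hc') vv hmod2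
        rcases Nat.lt_or_ge vv (hhf n m (kkf n m c')) with h | h
        · exact h
        · exfalso
          have hdvd : n ∣ vv - hhf n m (kkf n m c') :=
            (Nat.modEq_iff_dvd' h).mp hmod2.symm
          have := Nat.eq_zero_of_dvd_of_lt hdvd (by omega)
          omega

lemma chainB (hA : MatrixClassM n N A m) (hn : 0 < n) :
    ∀ c', c' < N → ∀ vv, vv % n = hhf n m c' % n → vv ≤ hhf n m c' →
    ∃ c'', c'' < N ∧ hhf n m c'' = vv := by
  intro c'
  induction c' using Nat.strong_induction_on with
  | _ c' ih =>
    intro hc' vv hmod hle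
    rcases Nat.eq_or_lt_of_le hle with he | hlt
    · exact ⟨c', hc', he.symm⟩
    · by_cases h1 : c' < n
      · exfalso
        rw [hhf_eq_of_lt h1] at hmod hlt
        rw [Nat.mod_eq_of_lt h1] at hmod
        have : vv % n ≤ vv := Nat.mod_le _ _
        omega
      · push_neg at h1
        have hrec : hhf n m c' = hhf n m (kkf n m c') + n := hhf_rec hn h1
        have hkc := kkf_lt n m hn h1
        have hmod2 : vv % n = hhf n m (kkf n m c') % n := by
          rw [hmod, hrec, Nat.add_mod_right]
        apply ih (kkf n m c') hkc (lt_trans hkc hc') vv hmod2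
        rcases Nat.lt_or_ge (hhf n m (kkf n m c')) vv with h | h
        · exfalso
          have hdvd : n ∣ vv - hhf n m (kkf n m c') :=
            (Nat.modEq_iff_dvd' (le_of_lt h)).mp hmod2.symm
          have := Nat.eq_zero_of_dvd_of_lt hdvd (by omega)
          omega
        · exact h

lemma res_inj_aux (hA : MatrixClassM n N A m) (hn : 0 < n) {i0 i0' : ℕ}
    (h01 : i0 < i0') (h02 : i0' < n)
    (hres : hhf n m (m (i0 + 1) - 1) % n = hhf n m (m (i0' + 1) - 1) % n) :
    False := by
  have hm1 := exc_lt hA hn (show i0 < n by omega)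
  have hm2 := exc_lt hA hn h02
  have hki : m (i0 + 1) - 1 < m (i0' + 1) - 1 := by
    have := m_mono_lt hA (show i0 + 1 < i0' + 1 by omega) (by omega)
    omega
  have hlt := hhf_lt_hhf hA hn (m (i0' + 1) - 1) (m (i0 + 1) - 1) hki
  obtain ⟨c'', hc1, hc2, hc3⟩ := chainA hA hn (m (i0' + 1) - 1)
    (ki_lt hA hn h02) (hhf n m (m (i0 + 1) - 1)) hres hlt
  have heq : kkf n m c'' = m (i0 + 1) - 1 := hhf_inj hA hn hc3
  have := kkf_nonexc hA hn hc1 hc2 (i0 + 1) (by omega) (by omega)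
  omega

lemma res_inj (hA : MatrixClassM n N A m) (hn : 0 < n) {i0 i0' : ℕ}
    (h1 : i0 < n) (h2 : i0' < n)
    (hres : hhf n m (m (i0 + 1) - 1) % n = hhf n m (m (i0' + 1) - 1) % n) :
    i0 = i0' := by
  rcases lt_trichotomy i0 i0' with h | h | h
  · exact absurd (res_inj_aux hA hn h h2 hres) not_false
  · exact h
  · exact absurd (res_inj_aux hA hn h h1 hres.symm) not_false

lemma res_surj (hA : MatrixClassM n N A m) (hn : 0 < n) (ρ : ℕ) (hρ : ρ < n) :
    ∃ i0, i0 < n ∧ hhf n m (m (i0 + 1) - 1) % n = ρ := by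
  set F : Fin n → Fin n := fun i => ⟨hhf n m (m ((i : ℕ) + 1) - 1) % n,
    Nat.mod_lt _ hn⟩ with hF
  have hinj : Function.Injective F := by
    intro a b hab
    exact Fin.ext (res_inj hA hn a.isLt b.isLt (congrArg Fin.val hab))
  have hsurj := Finite.surjective_of_injective hinj
  obtain ⟨i, hi⟩ := hsurj ⟨ρ, hρ⟩
  exact ⟨(i : ℕ), i.isLt, congrArg Fin.val hi⟩

lemma nsmul_coe (k a : ℕ) : ((k * a : ℕ) : WithBot ℕ) = k • ((a : ℕ) : WithBot ℕ) := by
  induction k with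
  | zero => simp
  | succ k ih =>
    rw [succ_nsmul, ← ih]
    push_cast [Nat.succ_mul]
    ring

lemma nsmul_bot {k : ℕ} (hk : 0 < k) : k • (⊥ : WithBot ℕ) = ⊥ := by
  cases k with
  | zero => omega
  | succ k => rw [succ_nsmul]; exact WithBot.add_bot _

lemma cast_height (k d t : ℕ) :
    ((k * d + t : ℕ) : WithBot ℕ) = k • ((d : ℕ) : WithBot ℕ) + ((t : ℕ) : WithBot ℕ) := by
  rw [← nsmul_coe]
  push_cast
  ring

lemma comp_le_iff (hn : 0 < n) (p : Polynomial ℂ) (t H : ℕ) :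
    n • p.degree + ((t : ℕ) : WithBot ℕ) ≤ ((H : ℕ) : WithBot ℕ) ↔
      ∀ d, H < n * d + t → p.coeff d = 0 := by
  constructor
  · intro hle d hd
    by_contra hne
    have h1 : ((d : ℕ) : WithBot ℕ) ≤ p.degree := le_degree_of_ne_zero hne
    have h2 : n • ((d : ℕ) : WithBot ℕ) + ((t : ℕ) : WithBot ℕ)
        ≤ n • p.degree + ((t : ℕ) : WithBot ℕ) :=
      add_le_add_left (nsmul_le_nsmul_right h1 n) _
    have h3 : ((n * d + t : ℕ) : WithBot ℕ) ≤ ((H : ℕ) : WithBot ℕ) := by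
      rw [cast_height]
      exact le_trans h2 hle
    have h4 : n * d + t ≤ H := by exact_mod_cast h3
    omega
  · intro hv
    by_cases hp : p = 0
    · subst hp
      rw [degree_zero, nsmul_bot hn, WithBot.bot_add]
      exact bot_le
    · rw [degree_eq_natDegree hp]
      have hcoeff : p.coeff p.natDegree ≠ 0 := fun h => hp (leadingCoeff_eq_zero.mp h)
      have hle : n * p.natDegree + t ≤ H := by
        by_contra hcon
        push_neg at hcon
        exact hcoeff (hv _ hcon)
      rw [← cast_height]
      exact_mod_cast hle

lemma vheight_le_iff (hn : 0 < n) (r : Fin n → Polynomial ℂ) (H : ℕ) :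
    vheight n r ≤ ((H : ℕ) : WithBot ℕ) ↔
      ∀ (t : Fin n) (d : ℕ), H < n * d + (t : ℕ) → (r t).coeff d = 0 := by
  unfold vheight
  rw [Finset.sup_le_iff]
  constructor
  · intro h t d hd
    exact (comp_le_iff hn (r t) (t : ℕ) H).mp (h t (Finset.mem_univ t)) d hd
  · intro h t _
    exact (comp_le_iff hn (r t) (t : ℕ) H).mpr (fun d hd => h t d hd)

lemma le_vheight (r : Fin n → Polynomial ℂ) (t : Fin n) (d : ℕ)
    (h : (r t).coeff d ≠ 0) :
    ((n * d + (t : ℕ) : ℕ) : WithBot ℕ) ≤ vheight n r := by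
  have h1 : ((d : ℕ) : WithBot ℕ) ≤ (r t).degree := le_degree_of_ne_zero h
  calc ((n * d + (t : ℕ) : ℕ) : WithBot ℕ)
      = n • ((d : ℕ) : WithBot ℕ) + ((t : ℕ) : WithBot ℕ) := cast_height _ _ _
    _ ≤ n • (r t).degree + ((t : ℕ) : WithBot ℕ) :=
        add_le_add_left (nsmul_le_nsmul_right h1 n) _
    _ ≤ vheight n r :=
        Finset.le_sup (f := fun j : Fin n => n • (r j).degree + ((j : ℕ) : WithBot ℕ))
          (Finset.mem_univ t)

lemma vheight_exists (r : Fin n → Polynomial ℂ) (t : Fin n) (h : r t ≠ 0) :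
    ∃ H : ℕ, vheight n r = ((H : ℕ) : WithBot ℕ) := by
  have hc : (r t).coeff (r t).natDegree ≠ 0 := fun hh => h (leadingCoeff_eq_zero.mp hh)
  have h1 := le_vheight r t (r t).natDegree hc
  have h2 : vheight n r ≠ ⊥ := by
    intro hb
    rw [hb] at h1
    have h3 := le_bot_iff.mp h1
    exact (by exact_mod_cast WithBot.coe_ne_bot :
      ((n * (r t).natDegree + (t : ℕ) : ℕ) : WithBot ℕ) ≠ ⊥) h3
  obtain ⟨a, ha⟩ := WithBot.ne_bot_iff_exists.mp h2
  exact ⟨a, ha.symm⟩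

section Main

variable {T : Matrix (Fin n) (Fin n) ℝ} {φ : Fin n → Fin N → Polynomial ℂ}
  {Q : Fin n → Fin n → Polynomial ℂ}

lemma no_cancel
    (hn : 0 < n) (hnN : n < N) (hA : MatrixClassM n N A m)
    (hT_upper : ∀ i j : Fin n, j < i → T i j = 0)
    (hT_diag : ∀ j : Fin n, T j j ≠ 0)
    (hφ_init : ∀ (j : Fin n) (i : Fin n),
      φ j (Fin.castLE (le_of_lt hnN) i) = C ((T j i : ℂ)))
    (hφ_rec : ∀ (j : Fin n) (k : Fin N),
      (∀ i, 1 ≤ i → i ≤ n → m i ≠ (k : ℕ) + 1) →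
      ∑ l, C ((A k l : ℂ)) * φ j l = X * φ j k)
    (hQ : ∀ (j i : Fin n) (k : Fin N), (k : ℕ) + 1 = m ((i : ℕ) + 1) →
      Q j i = X * φ j k - ∑ l, C ((A k l : ℂ)) * φ j l)
    (g : Fin n → Polynomial ℂ) (l0 : Fin n) (hg : g l0 ≠ 0)
    (he : ∀ t : Fin n, (∑ l, g l * Q t l) = 0) : False := by
  classical
  set E := Finset.univ.filter (fun l : Fin n => g l ≠ 0) with hE
  have hne : E.Nonempty := ⟨l0, by simp [hE, hg]⟩
  set Mf : Fin n → ℕ :=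
    fun l => n * (g l).natDegree + (hhf n m (m ((l : ℕ) + 1) - 1) + n) with hMf
  obtain ⟨ls, hlsE, hmax⟩ := Finset.exists_max_image E Mf hne
  have hgls : g ls ≠ 0 := by
    have := (Finset.mem_filter.mp hlsE).2
    simpa using this
  set hk := hhf n m (m ((ls : ℕ) + 1) - 1) with hhkdef
  set ρ : ℕ := hk % n with hρdef
  set tρ : Fin n := ⟨ρ, Nat.mod_lt _ hn⟩ with htρdef
  set Dm : ℕ := (g ls).natDegree + (hk / n + 1) with hDmdef
  have hmodl : ∀ u : Fin n, Mf u % n = hhf n m (m ((u : ℕ) + 1) - 1) % n := by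
    intro u
    have h9 : Mf u = n * ((g u).natDegree + 1) + hhf n m (m ((u : ℕ) + 1) - 1) := by
      simp only [hMf]; ring
    rw [h9, Nat.mul_add_mod]
  have hMls : Mf ls = n * Dm + ρ := by
    have hdm := Nat.div_add_mod hk n
    have h1 : n * Dm = n * (g ls).natDegree + n * (hk / n) + n := by
      rw [hDmdef]; ring
    simp only [hMf, ← hhkdef]
    omega
  have hcoeff := congrArg (fun p => p.coeff Dm) (he tρ)
  simp only [finset_sum_coeff, coeff_zero] at hcoeff
  have hterm : ∀ l ∈ Finset.univ, l ≠ ls → (g l * Q tρ l).coeff Dm = 0 := by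
    intro l _ hlne
    rw [coeff_mul]
    apply Finset.sum_eq_zero
    rintro ⟨a, b⟩ hab
    rw [Finset.HasAntidiagonal.mem_antidiagonal] at hab
    by_contra hne2
    have ha : (g l).coeff a ≠ 0 := fun h => hne2 (by simp [h])
    have hb : (Q tρ l).coeff b ≠ 0 := fun h => hne2 (by simp [h])
    have ha' : a ≤ (g l).natDegree := le_natDegree_of_ne_zero ha
    have hglne : g l ≠ 0 := fun h => ha (by rw [h]; simp)
    have hlE : l ∈ E := by simp [hE, hglne]
    have hb' : n * b + ρ ≤ hhf n m (m ((l : ℕ) + 1) - 1) + n := by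
      by_contra hcon
      push_neg at hcon
      exact hb (q_vanish hn hnN hA hT_upper hT_diag hφ_init hφ_rec hQ l tρ b
        (by simpa using hcon))
    have hMl_lt : Mf l < Mf ls := by
      rcases Nat.lt_or_ge (Mf l) (Mf ls) with h | h
      · exact h
      · exfalso
        have hle := hmax l hlE
        have heq : Mf l = Mf ls := le_antisymm hle h
        have hres : hhf n m (m ((l : ℕ) + 1) - 1) % n
            = hhf n m (m ((ls : ℕ) + 1) - 1) % n := by
          rw [← hmodl l, ← hmodl ls, heq]
        exact hlne (Fin.ext (res_inj hA hn l.isLt ls.isLt hres))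
    have h1 : n * a ≤ n * (g l).natDegree := Nat.mul_le_mul_left n ha'
    have h3 : n * a + n * b = n * Dm := by
      have h4 : n * a + n * b = n * (a + b) := by ring
      rw [h4, hab]
    have h5 : n * a + n * b + ρ ≤ Mf l := by
      simp only [hMf]
      omega
    omega
  rw [Finset.sum_eq_single_of_mem ls (Finset.mem_univ ls) hterm] at hcoeff
  rw [coeff_mul] at hcoeff
  have hpair : ((g ls).natDegree, hk / n + 1) ∈ Finset.HasAntidiagonal.antidiagonal Dm := by
    rw [Finset.HasAntidiagonal.mem_antidiagonal]
  have hothers : ∀ p ∈ Finset.HasAntidiagonal.antidiagonal Dm,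
      p ≠ ((g ls).natDegree, hk / n + 1) →
      (g ls).coeff p.1 * (Q tρ ls).coeff p.2 = 0 := by
    rintro ⟨a, b⟩ hab hne2
    rw [Finset.HasAntidiagonal.mem_antidiagonal] at hab
    by_contra hne3
    have ha : (g ls).coeff a ≠ 0 := fun h => hne3 (by simp [h])
    have hb : (Q tρ ls).coeff b ≠ 0 := fun h => hne3 (by simp [h])
    have ha' : a ≤ (g ls).natDegree := le_natDegree_of_ne_zero ha
    have hb' : n * b + ρ ≤ hk + n := by
      by_contra hcon
      push_neg at hcon
      exact hb (q_vanish hn hnN hA hT_upper hT_diag hφ_init hφ_rec hQ ls tρ b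
        (by simpa using hcon))
    have hbb : b ≤ hk / n + 1 := by
      have hdm := Nat.div_add_mod hk n
      have h4 : n * b ≤ n * (hk / n + 1) := by
        have h5 : n * (hk / n + 1) = n * (hk / n) + n := by ring
        omega
      exact Nat.le_of_mul_le_mul_left h4 hn
    apply hne2
    have hfin : a = (g ls).natDegree ∧ b = hk / n + 1 := by omega
    simp [hfin.1, hfin.2]
  rw [Finset.sum_eq_single_of_mem _ hpair hothers] at hcoeff
  have hlead : (g ls).coeff (g ls).natDegree ≠ 0 :=
    fun h => hgls (leadingCoeff_eq_zero.mp h)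
  exact mul_ne_zero hlead
    (q_lead hn hnN hA hT_upper hT_diag hφ_init hφ_rec hQ ls tρ rfl) hcoeff


lemma red
    (hn : 0 < n) (hnN : n < N) (hA : MatrixClassM n N A m)
    (hT_upper : ∀ i j : Fin n, j < i → T i j = 0)
    (hT_diag : ∀ j : Fin n, T j j ≠ 0)
    (hφ_init : ∀ (j : Fin n) (i : Fin n),
      φ j (Fin.castLE (le_of_lt hnN) i) = C ((T j i : ℂ)))
    (hφ_rec : ∀ (j : Fin n) (k : Fin N),
      (∀ i, 1 ≤ i → i ≤ n → m i ≠ (k : ℕ) + 1) →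
      ∑ l, C ((A k l : ℂ)) * φ j l = X * φ j k)
    (hQ : ∀ (j i : Fin n) (k : Fin N), (k : ℕ) + 1 = m ((i : ℕ) + 1) →
      Q j i = X * φ j k - ∑ l, C ((A k l : ℂ)) * φ j l) :
    ∀ (H : ℕ) (r : Fin n → Polynomial ℂ),
    (∀ (t : Fin n) (d : ℕ), H < n * d + (t : ℕ) → (r t).coeff d = 0) →
    ∃ (γ : Fin N → ℂ) (Sc : Fin n → Polynomial ℂ),
      (∀ t, r t = (∑ c : Fin N, C (γ c) * φ t c) + ∑ l, Sc l * Q t l) ∧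
      (∀ c : Fin N, γ c ≠ 0 → hhf n m (c : ℕ) ≤ H) ∧
      (∀ (l : Fin n) (d : ℕ), (Sc l).coeff d ≠ 0 →
        n * d + (hhf n m (m ((l : ℕ) + 1) - 1) + n) ≤ H) := by
  intro H
  induction H using Nat.strong_induction_on with
  | _ H IH =>
    intro r hr
    have next : ∀ r' : Fin n → Polynomial ℂ,
        (∀ (t : Fin n) (d : ℕ), H ≤ n * d + (t : ℕ) → (r' t).coeff d = 0) →
        ∃ (γ : Fin N → ℂ) (Sc : Fin n → Polynomial ℂ),
          (∀ t, r' t = (∑ c : Fin N, C (γ c) * φ t c) + ∑ l, Sc l * Q t l) ∧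
          (∀ c : Fin N, γ c ≠ 0 → hhf n m (c : ℕ) ≤ H) ∧
          (∀ (l : Fin n) (d : ℕ), (Sc l).coeff d ≠ 0 →
            n * d + (hhf n m (m ((l : ℕ) + 1) - 1) + n) ≤ H) := by
      intro r' hv
      rcases Nat.eq_zero_or_pos H with hH0 | hHpos
      · refine ⟨0, 0, ?_, by simp, by simp⟩
        intro t
        have hz : r' t = 0 := Polynomial.ext fun d => hv t d (by omega)
        rw [hz]
        simp
      · obtain ⟨γ, Sc, he, hb1, hb2⟩ := IH (H - 1) (by omega) r'
          (fun t d hd => hv t d (by omega))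
        exact ⟨γ, Sc, he, fun c hc => le_trans (hb1 c hc) (by omega),
          fun l d hd => le_trans (hb2 l d hd) (by omega)⟩
    have hρn : H % n < n := Nat.mod_lt _ hn
    set tρ : Fin n := ⟨H % n, hρn⟩ with htρdef
    have hHdm : n * (H / n) + H % n = H := Nat.div_add_mod H n
    set β := (r tρ).coeff (H / n) with hβdef
    have hslot : ∀ (t : Fin n) (d : ℕ), n * d + (t : ℕ) = H → t = tρ ∧ d = H / n := by
      intro t d hd
      have h1 : (t : ℕ) = H % n := by
        have h2 := Nat.mul_add_mod n d ((t : ℕ))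
        rw [hd] at h2
        rw [Nat.mod_eq_of_lt t.isLt] at h2
        omega
      have h2 : d = H / n := by
        have h3 := Nat.mul_add_div hn d ((t : ℕ))
        rw [hd] at h3
        rw [Nat.div_eq_of_lt t.isLt] at h3
        omega
      exact ⟨Fin.ext h1, h2⟩
    by_cases hβ0 : β = 0
    · apply next r
      intro t d hd
      rcases Nat.eq_or_lt_of_le hd with he | hlt
      · obtain ⟨ht, hdd⟩ := hslot t d he.symm
        subst ht
        subst hdd
        exact hβ0
      · exact hr t d hlt
    · by_cases hex : ∃ cF : Fin N, hhf n m (cF : ℕ) = H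
      · obtain ⟨c0, hc0⟩ := hex
        have hLne : (φ tρ c0).coeff (H / n) ≠ 0 := by
          have h5 := (phi_main hn hnN hA hT_upper hT_diag hφ_init hφ_rec
            (c0 : ℕ) c0.isLt).2 tρ (by rw [hc0])
          rw [Fin.eta, hc0] at h5
          exact h5
        set L := (φ tρ c0).coeff (H / n) with hLdef
        set r' : Fin n → Polynomial ℂ := fun t => r t - C (β * L⁻¹) * φ t c0 with hr'def
        have hv' : ∀ (t : Fin n) (d : ℕ), H ≤ n * d + (t : ℕ) → (r' t).coeff d = 0 := by
          intro t d hd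
          simp only [hr'def, coeff_sub, coeff_C_mul]
          rcases Nat.eq_or_lt_of_le hd with he | hlt
          · obtain ⟨ht, hdd⟩ := hslot t d he.symm
            subst ht
            subst hdd
            rw [← hβdef, ← hLdef, mul_assoc, inv_mul_cancel₀ hLne, mul_one, sub_self]
          · rw [hr t d hlt]
            have h6 := (phi_main hn hnN hA hT_upper hT_diag hφ_init hφ_rec
              (c0 : ℕ) c0.isLt).1 t d (by omega)
            rw [Fin.eta] at h6
            rw [h6]
            simp
        obtain ⟨γ, Sc, he, hb1, hb2⟩ := next r' hv'
        refine ⟨fun c => if c = c0 then γ c + β * L⁻¹ else γ c, Sc, ?_, ?_, hb2⟩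
        · intro t
          have hre : r t = r' t + C (β * L⁻¹) * φ t c0 := by simp [hr'def]
          rw [hre, he t]
          have hsum : (∑ c : Fin N, C ((if c = c0 then γ c + β * L⁻¹ else γ c)) * φ t c)
              = (∑ c : Fin N, C (γ c) * φ t c) + C (β * L⁻¹) * φ t c0 := by
            have hterm : ∀ c : Fin N, C ((if c = c0 then γ c + β * L⁻¹ else γ c)) * φ t c
                = C (γ c) * φ t c + (if c = c0 then C (β * L⁻¹) * φ t c0 else 0) := by
              intro c
              by_cases hcc : c = c0
              · subst hcc
                rw [if_pos rfl, if_pos rfl, map_add, add_mul]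
              · rw [if_neg hcc, if_neg hcc, add_zero]
            rw [Finset.sum_congr rfl (fun c _ => hterm c), Finset.sum_add_distrib,
              Finset.sum_ite_eq' Finset.univ c0 _]
            simp
          rw [hsum]
          ring
        · intro c hc
          have hc' : (if c = c0 then γ c + β * L⁻¹ else γ c) ≠ 0 := hc
          by_cases hcc : c = c0
          · subst hcc
            exact le_of_eq hc0
          · rw [if_neg hcc] at hc'
            exact hb1 c hc'
      · push_neg at hex
        obtain ⟨i0, hi0n, hi0res⟩ := res_surj hA hn (H % n) hρn
        set l0 : Fin n := ⟨i0, hi0n⟩ with hl0def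
        have hHq : hhf n m (m (i0 + 1) - 1) + n ≤ H := by
          by_contra hcon
          push_neg at hcon
          rcases Nat.lt_trichotomy H (hhf n m (m (i0 + 1) - 1)) with h | h | h
          · obtain ⟨c'', hc1, hc2⟩ := chainB hA hn (m (i0 + 1) - 1)
              (ki_lt hA hn hi0n) H (by rw [hi0res]) (le_of_lt h)
            exact hex ⟨c'', hc1⟩ hc2
          · exact hex ⟨m (i0 + 1) - 1, ki_lt hA hn hi0n⟩ h.symm
          · have hdvd : n ∣ H - hhf n m (m (i0 + 1) - 1) := by
              apply (Nat.modEq_iff_dvd' (le_of_lt h)).mp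
              show hhf n m (m (i0 + 1) - 1) % n = H % n
              rw [hi0res]
            have h7 := Nat.eq_zero_of_dvd_of_lt hdvd (by omega)
            omega
        have hdvd2 : n ∣ H - (hhf n m (m (i0 + 1) - 1) + n) := by
          apply (Nat.modEq_iff_dvd' hHq).mp
          show (hhf n m (m (i0 + 1) - 1) + n) % n = H % n
          rw [Nat.add_mod_right, hi0res]
        obtain ⟨d0, hd0def⟩ : ∃ x, x = (H - (hhf n m (m (i0 + 1) - 1) + n)) / n :=
          ⟨_, rfl⟩
        have hd0 : H = n * d0 + (hhf n m (m (i0 + 1) - 1) + n) := by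
          have h8 := Nat.mul_div_cancel' hdvd2
          rw [← hd0def] at h8
          omega
        obtain ⟨Dq, hDqdef⟩ : ∃ x, x = hhf n m (m (i0 + 1) - 1) / n := ⟨_, rfl⟩
        have hLq : (Q tρ l0).coeff (Dq + 1) ≠ 0 := by
          rw [hDqdef]
          exact q_lead hn hnN hA hT_upper hT_diag hφ_init hφ_rec hQ l0 tρ hi0res.symm
        set Lq := (Q tρ l0).coeff (Dq + 1) with hLqdef
        set r' : Fin n → Polynomial ℂ :=
          fun t => r t - C (β * Lq⁻¹) * (Q t l0 * X ^ d0) with hr'def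
        have hdm2 : n * (hhf n m (m (i0 + 1) - 1) / n) + hhf n m (m (i0 + 1) - 1) % n
            = hhf n m (m (i0 + 1) - 1) := Nat.div_add_mod _ n
        have hv' : ∀ (t : Fin n) (d : ℕ), H ≤ n * d + (t : ℕ) → (r' t).coeff d = 0 := by
          intro t d hd
          simp only [hr'def, coeff_sub, coeff_C_mul, coeff_mul_X_pow']
          rcases Nat.eq_or_lt_of_le hd with he | hlt
          · obtain ⟨ht, hdd⟩ := hslot t d he.symm
            subst ht
            have hDHd0 : d = d0 + (Dq + 1) := by
              rw [hdd]
              conv_lhs => rw [hd0]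
              rw [Nat.mul_add_div hn, Nat.add_div_right _ hn, ← hDqdef]
            rw [if_pos (by omega : d0 ≤ d)]
            have h10 : d - d0 = Dq + 1 := by omega
            rw [h10, ← hLqdef, hdd, ← hβdef, mul_assoc, inv_mul_cancel₀ hLq,
              mul_one, sub_self]
          · rw [hr t d hlt]
            by_cases hd0le : d0 ≤ d
            · rw [if_pos hd0le]
              have hbr : hhf n m (m ((l0 : ℕ) + 1) - 1) = hhf n m (m (i0 + 1) - 1) := rfl
              rw [q_vanish hn hnN hA hT_upper hT_diag hφ_init hφ_rec hQ l0 t (d - d0) ?_]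
              · simp
              · rw [hbr]
                have h9 : n * d = n * d0 + n * (d - d0) := by
                  have h10 : d = d0 + (d - d0) := by omega
                  calc n * d = n * (d0 + (d - d0)) := by rw [← h10]
                    _ = n * d0 + n * (d - d0) := by ring
                omega
            · rw [if_neg hd0le]
              simp
        obtain ⟨γ, Sc, he, hb1, hb2⟩ := next r' hv'
        refine ⟨γ, fun l => if l = l0 then Sc l + C (β * Lq⁻¹) * X ^ d0 else Sc l,
          ?_, hb1, ?_⟩
        · intro t
          have hre : r t = r' t + C (β * Lq⁻¹) * (Q t l0 * X ^ d0) := by simp [hr'def]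
          rw [hre, he t]
          have hsum : (∑ l : Fin n,
                (if l = l0 then Sc l + C (β * Lq⁻¹) * X ^ d0 else Sc l) * Q t l)
              = (∑ l, Sc l * Q t l) + C (β * Lq⁻¹) * (Q t l0 * X ^ d0) := by
            have hterm : ∀ l : Fin n,
                (if l = l0 then Sc l + C (β * Lq⁻¹) * X ^ d0 else Sc l) * Q t l
                = Sc l * Q t l
                  + (if l = l0 then C (β * Lq⁻¹) * (Q t l0 * X ^ d0) else 0) := by
              intro l
              by_cases hcc : l = l0
              · subst hcc
                rw [if_pos rfl, if_pos rfl, add_mul]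
                ring_nf
              · rw [if_neg hcc, if_neg hcc, add_zero]
            rw [Finset.sum_congr rfl (fun l _ => hterm l), Finset.sum_add_distrib,
              Finset.sum_ite_eq' Finset.univ l0 _]
            simp
          rw [hsum]
          ring
        · intro l d hd
          have hd' : ((if l = l0 then Sc l + C (β * Lq⁻¹) * X ^ d0 else Sc l)).coeff d ≠ 0 := hd
          by_cases hcc : l = l0
          · subst hcc
            rw [if_pos rfl] at hd'
            simp only [coeff_add, coeff_C_mul, coeff_X_pow] at hd'
            have hbr : hhf n m (m ((l0 : ℕ) + 1) - 1) = hhf n m (m (i0 + 1) - 1) := rfl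
            rw [hbr]
            by_cases hdd0 : d = d0
            · subst hdd0
              omega
            · have h11 : (Sc l0).coeff d ≠ 0 := by
                intro h
                rw [h] at hd'
                simp [hdd0] at hd'
              have := hb2 l0 d h11
              rw [hbr] at this
              exact this
          · rw [if_neg hcc] at hd'
            exact hb2 l d hd'

lemma q_mem
    (hn : 0 < n) (hA : MatrixClassM n N A m)
    (hQ : ∀ (j i : Fin n) (k : Fin N), (k : ℕ) + 1 = m ((i : ℕ) + 1) →
      Q j i = X * φ j k - ∑ l, C ((A k l : ℂ)) * φ j l)
    (x : Fin N → ℝ) (v : Fin N → Fin N → ℂ)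
    (heig : ∀ k, (A.map (fun a => (a : ℂ))).mulVec (v k) = (x k : ℂ) • v k)
    (αc : Fin N → Fin n → ℂ)
    (hαc : ∀ (k : Fin N) (i : Fin N),
      v k i = ∑ j, αc k j * (φ j i).eval ((x k : ℂ)))
    (i : Fin n) :
    ∀ k : Fin N, ∑ t : Fin n, αc k t * (Q t i).eval ((x k : ℂ)) = 0 := by
  intro k
  have hMi := exc_lt hA hn i.isLt
  set kiF : Fin N := ⟨m ((i : ℕ) + 1) - 1, ki_lt hA hn i.isLt⟩ with hkiF
  have hq : ∀ t : Fin n, (Q t i).eval ((x k : ℂ))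
      = (x k : ℂ) * (φ t kiF).eval ((x k : ℂ))
        - ∑ l : Fin N, ((A kiF l : ℂ)) * (φ t l).eval ((x k : ℂ)) := by
    intro t
    rw [hQ t i kiF (by simp [hkiF]; omega)]
    simp [eval_finset_sum]
  have hstep : ∑ t : Fin n, αc k t * (Q t i).eval ((x k : ℂ))
      = (x k : ℂ) * (∑ t : Fin n, αc k t * (φ t kiF).eval ((x k : ℂ)))
        - ∑ l : Fin N, ((A kiF l : ℂ))
            * (∑ t : Fin n, αc k t * (φ t l).eval ((x k : ℂ))) := by
    simp only [hq, mul_sub]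
    rw [Finset.sum_sub_distrib]
    congr 1
    · rw [Finset.mul_sum]
      apply Finset.sum_congr rfl
      intro t _
      ring
    · calc ∑ t : Fin n, αc k t * ∑ l : Fin N, ((A kiF l : ℂ)) * (φ t l).eval ((x k : ℂ))
          = ∑ t : Fin n, ∑ l : Fin N,
              αc k t * (((A kiF l : ℂ)) * (φ t l).eval ((x k : ℂ))) := by
            apply Finset.sum_congr rfl
            intro t _
            rw [Finset.mul_sum]
        _ = ∑ l : Fin N, ∑ t : Fin n,
              αc k t * (((A kiF l : ℂ)) * (φ t l).eval ((x k : ℂ))) := Finset.sum_comm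
        _ = ∑ l : Fin N, ((A kiF l : ℂ))
              * (∑ t : Fin n, αc k t * (φ t l).eval ((x k : ℂ))) := by
            apply Finset.sum_congr rfl
            intro l _
            rw [Finset.mul_sum]
            apply Finset.sum_congr rfl
            intro t _
            ring
  rw [hstep, ← hαc k kiF]
  have hv2 : ∀ l : Fin N, ∑ t : Fin n, αc k t * (φ t l).eval ((x k : ℂ)) = v k l :=
    fun l => (hαc k l).symm
  rw [Finset.sum_congr rfl (fun l _ => by rw [hv2 l])]
  have h8 := congrFun (heig k) kiF
  simp only [Matrix.mulVec, dotProduct, Matrix.map_apply, Pi.smul_apply,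
    smul_eq_mul] at h8
  rw [h8]
  ring

lemma gamma_zero {v : Fin N → Fin N → ℂ}
    (horm : ∀ k l : Fin N,
      ∑ i, (starRingEnd ℂ) (v k i) * v l i = if k = l then 1 else 0)
    (γ : Fin N → ℂ) (h : ∀ k, ∑ c, v k c * γ c = 0) : γ = 0 := by
  classical
  set V : Matrix (Fin N) (Fin N) ℂ := Matrix.of (fun k c => v k c) with hV
  set Vc : Matrix (Fin N) (Fin N) ℂ :=
    Matrix.of (fun k c => (starRingEnd ℂ) (v k c)) with hVc
  have h1 : Vc * Vᵀ = 1 := by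
    ext k l
    rw [Matrix.mul_apply]
    simp only [hV, hVc, Matrix.of_apply, Matrix.transpose_apply, Matrix.one_apply]
    exact horm k l
  have h2 : Vᵀ * Vc = 1 := mul_eq_one_comm.mp h1
  have h3 : Vcᵀ * V = 1 := by
    have h4 := congrArg Matrix.transpose h2
    rwa [Matrix.transpose_mul, Matrix.transpose_transpose, Matrix.transpose_one] at h4
  have h4 : V.mulVec γ = 0 := by
    ext k
    simp only [Matrix.mulVec, dotProduct, hV, Matrix.of_apply, Pi.zero_apply]
    exact h k
  have h5 := congrArg (fun w => Vcᵀ.mulVec w) h4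
  simp only [Matrix.mulVec_mulVec] at h5
  rw [h3, Matrix.one_mulVec] at h5
  simpa using h5

end Main
end Stmt14Aux

open Stmt14Aux

/-- For each j, the vector polynomial q_j is a j-th generator of 𝕊({σ_k},{x_k}). -/
theorem stmt14
    (n N : ℕ) (hn : 0 < n) (hnN : n < N)
    (A : Matrix (Fin N) (Fin N) ℝ) (m : ℕ → ℕ)
    (hA : MatrixClassM n N A m)
    (T : Matrix (Fin n) (Fin n) ℝ)
    (hT_upper : ∀ i j : Fin n, j < i → T i j = 0)
    (hT_diag : ∀ j : Fin n, T j j ≠ 0)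
    (φ : Fin n → Fin N → Polynomial ℂ)
    (hφ_init : ∀ (j : Fin n) (i : Fin n),
      φ j (Fin.castLE (le_of_lt hnN) i) = C ((T j i : ℂ)))
    (hφ_rec : ∀ (j : Fin n) (k : Fin N),
      (∀ i, 1 ≤ i → i ≤ n → m i ≠ (k : ℕ) + 1) →
      ∑ l, C ((A k l : ℂ)) * φ j l = X * φ j k)
    (Q : Fin n → Fin n → Polynomial ℂ)
    (hQ : ∀ (j i : Fin n) (k : Fin N), (k : ℕ) + 1 = m ((i : ℕ) + 1) →
      Q j i = X * φ j k - ∑ l, C ((A k l : ℂ)) * φ j l)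
    (x : Fin N → ℝ) (v : Fin N → Fin N → ℂ)
    (heig : ∀ k, (A.map (fun a => (a : ℂ))).mulVec (v k) = (x k : ℂ) • v k)
    (horm : ∀ k l : Fin N,
      ∑ i, (starRingEnd ℂ) (v k i) * v l i = if k = l then 1 else 0)
    (αc : Fin N → Fin n → ℂ)
    (hαc : ∀ (k : Fin N) (i : Fin N),
      v k i = ∑ j, αc k j * (φ j i).eval ((x k : ℂ)))
    :
    IsGenSeq (interpSet (fun k => ((x k : ℂ))) αc) (fun i => fun jj => Q jj i) := by
  classical
  intro j
  -- leading coefficients of the q's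
  have hρn : ∀ l : Fin n, hhf n m (m ((l : ℕ) + 1) - 1) % n < n :=
    fun l => Nat.mod_lt _ hn
  have hlead : ∀ l : Fin n,
      (Q ⟨hhf n m (m ((l : ℕ) + 1) - 1) % n, hρn l⟩ l).coeff
        (hhf n m (m ((l : ℕ) + 1) - 1) / n + 1) ≠ 0 :=
    fun l => q_lead hn hnN hA hT_upper hT_diag hφ_init hφ_rec hQ l _ rfl
  -- the q's are nonzero
  have hqne : ∀ l : Fin n, (fun t => Q t l) ≠ (0 : Fin n → Polynomial ℂ) := by
    intro l hcon
    have h1 := hlead l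
    have h2 := congrFun hcon ⟨hhf n m (m ((l : ℕ) + 1) - 1) % n, hρn l⟩
    rw [h2] at h1
    simp at h1
  -- exact heights of the q's
  have hvh : ∀ l : Fin n, vheight n (fun t => Q t l)
      = ((hhf n m (m ((l : ℕ) + 1) - 1) + n : ℕ) : WithBot ℕ) := by
    intro l
    apply le_antisymm
    · rw [vheight_le_iff hn]
      intro t d hd
      exact q_vanish hn hnN hA hT_upper hT_diag hφ_init hφ_rec hQ l t d hd
    · have h2 := le_vheight (fun t => Q t l) ⟨_, hρn l⟩ _ (hlead l)
      have harith : n * (hhf n m (m ((l : ℕ) + 1) - 1) / n + 1)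
          + (hhf n m (m ((l : ℕ) + 1) - 1) % n)
          = hhf n m (m ((l : ℕ) + 1) - 1) + n := by
        have hdm := Nat.div_add_mod (hhf n m (m ((l : ℕ) + 1) - 1)) n
        have h9 : n * (hhf n m (m ((l : ℕ) + 1) - 1) / n + 1)
            = n * (hhf n m (m ((l : ℕ) + 1) - 1) / n) + n := by ring
        omega
      have h2' : ((n * (hhf n m (m ((l : ℕ) + 1) - 1) / n + 1)
          + (hhf n m (m ((l : ℕ) + 1) - 1) % n) : ℕ) : WithBot ℕ)
          ≤ vheight n (fun t => Q t l) := h2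
      rwa [harith] at h2'
  -- the q's belong to the interpolation set
  have hSmem : ∀ l : Fin n,
      (fun t => Q t l) ∈ interpSet (fun k => ((x k : ℂ))) αc :=
    fun l k => q_mem hn hA hQ x v heig αc hαc l k
  -- decomposition of elements of the interpolation set
  have hdecomp : ∀ s ∈ interpSet (fun k => ((x k : ℂ))) αc, ∀ H : ℕ,
      (∀ (t : Fin n) (d : ℕ), H < n * d + (t : ℕ) → (s t).coeff d = 0) →
      ∃ Sc : Fin n → Polynomial ℂ,
        (∀ t, s t = ∑ l, Sc l * Q t l) ∧
        (∀ (l : Fin n) (d : ℕ), (Sc l).coeff d ≠ 0 →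
          n * d + (hhf n m (m ((l : ℕ) + 1) - 1) + n) ≤ H) := by
    intro s hs H hb
    obtain ⟨γ, Sc, he, hb1, hb2⟩ :=
      red hn hnN hA hT_upper hT_diag hφ_init hφ_rec hQ H s hb
    have hγ0 : γ = 0 := by
      apply gamma_zero horm
      intro k
      have h0 : ∑ t : Fin n, αc k t * (s t).eval ((x k : ℂ)) = 0 := hs k
      have hA1 : ∀ t : Fin n, (s t).eval ((x k : ℂ))
          = (∑ c : Fin N, γ c * (φ t c).eval ((x k : ℂ)))
            + ∑ l : Fin n, (Sc l).eval ((x k : ℂ)) * (Q t l).eval ((x k : ℂ)) := by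
        intro t
        rw [he t]
        simp [eval_finset_sum]
      have h2 : ∑ t : Fin n, αc k t * (s t).eval ((x k : ℂ))
          = (∑ c : Fin N, γ c * v k c)
            + ∑ l : Fin n, (Sc l).eval ((x k : ℂ))
                * (∑ t : Fin n, αc k t * (Q t l).eval ((x k : ℂ))) := by
        simp only [hA1, mul_add]
        rw [Finset.sum_add_distrib]
        congr 1
        · calc ∑ t : Fin n, αc k t * ∑ c : Fin N, γ c * (φ t c).eval ((x k : ℂ))
              = ∑ t : Fin n, ∑ c : Fin N,
                  αc k t * (γ c * (φ t c).eval ((x k : ℂ))) := by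
                apply Finset.sum_congr rfl
                intro t _
                rw [Finset.mul_sum]
            _ = ∑ c : Fin N, ∑ t : Fin n,
                  αc k t * (γ c * (φ t c).eval ((x k : ℂ))) := Finset.sum_comm
            _ = ∑ c : Fin N, γ c
                  * ∑ t : Fin n, αc k t * (φ t c).eval ((x k : ℂ)) := by
                apply Finset.sum_congr rfl
                intro c _
                rw [Finset.mul_sum]
                apply Finset.sum_congr rfl
                intro t _
                ring
            _ = ∑ c : Fin N, γ c * v k c := by
                apply Finset.sum_congr rfl
                intro c _
                rw [← hαc k c]
        · calc ∑ t : Fin n, αc k t * ∑ l : Fin n,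
                  (Sc l).eval ((x k : ℂ)) * (Q t l).eval ((x k : ℂ))
              = ∑ t : Fin n, ∑ l : Fin n,
                  αc k t * ((Sc l).eval ((x k : ℂ)) * (Q t l).eval ((x k : ℂ))) := by
                apply Finset.sum_congr rfl
                intro t _
                rw [Finset.mul_sum]
            _ = ∑ l : Fin n, ∑ t : Fin n,
                  αc k t * ((Sc l).eval ((x k : ℂ)) * (Q t l).eval ((x k : ℂ))) :=
                Finset.sum_comm
            _ = ∑ l : Fin n, (Sc l).eval ((x k : ℂ))
                  * ∑ t : Fin n, αc k t * (Q t l).eval ((x k : ℂ)) := by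
                apply Finset.sum_congr rfl
                intro l _
                rw [Finset.mul_sum]
                apply Finset.sum_congr rfl
                intro t _
                ring
      have h3 : ∑ l : Fin n, (Sc l).eval ((x k : ℂ))
          * (∑ t : Fin n, αc k t * (Q t l).eval ((x k : ℂ))) = 0 := by
        apply Finset.sum_eq_zero
        intro l _
        rw [q_mem hn hA hQ x v heig αc hαc l k, mul_zero]
      rw [h2, h3, add_zero] at h0
      rw [Finset.sum_congr rfl (fun c _ => mul_comm (v k c) (γ c))]
      exact h0
    subst hγ0
    refine ⟨Sc, ?_, hb2⟩
    intro t
    have := he t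
    simpa using this
  refine ⟨hqne j, ⟨hSmem j, ?_⟩, ?_⟩
  · -- q_j not in the previous span
    intro hmem
    obtain ⟨cf, hcf⟩ := hmem
    set g : Fin n → Polynomial ℂ :=
      fun l => (if l = j then 1 else 0) + (if l < j then -(cf l) else 0) with hg
    have hgj : g j ≠ 0 := by
      simp [hg, lt_irrefl]
    have hsum0 : ∀ t : Fin n, ∑ l, g l * Q t l = 0 := by
      intro t
      have hct := congrFun hcf t
      simp only [hg, add_mul]
      rw [Finset.sum_add_distrib]
      have hkey1 : ∀ l : Fin n, (if l = j then (1 : Polynomial ℂ) else 0) * Q t l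
          = if l = j then Q t j else 0 := by
        intro l
        split_ifs with h
        · rw [h, one_mul]
        · rw [zero_mul]
      have hpart1 : ∑ l : Fin n, (if l = j then (1 : Polynomial ℂ) else 0) * Q t l
          = Q t j := by
        rw [Finset.sum_congr rfl (fun l _ => hkey1 l)]
        rw [Finset.sum_ite_eq' Finset.univ j]
        simp
      have hkey2 : ∀ l : Fin n, (if l < j then -(cf l) else 0) * Q t l
          = if l < j then -(cf l * Q t l) else 0 := by
        intro l
        split_ifs with h
        · rw [neg_mul]
        · rw [zero_mul]
      have hpart2 : ∑ l : Fin n, (if l < j then -(cf l) else 0) * Q t l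
          = -(∑ i ∈ Finset.univ.filter (fun i => i < j), cf i * Q t i) := by
        rw [Finset.sum_congr rfl (fun l _ => hkey2 l)]
        rw [← Finset.sum_filter]
        rw [Finset.sum_neg_distrib]
      have hct' : Q t j = ∑ i ∈ Finset.univ.filter (fun i => i < j), cf i * Q t i := hct
      rw [hpart1, hpart2, hct']
      ring
    exact no_cancel hn hnN hA hT_upper hT_diag hφ_init hφ_rec hQ g j hgj hsum0
  · -- minimality of height
    intro s hs hsne
    obtain ⟨t0, hst0⟩ := Function.ne_iff.mp hsne
    obtain ⟨H, hH⟩ := vheight_exists s t0 hst0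
    have hb := (vheight_le_iff hn s H).mp (le_of_eq hH)
    obtain ⟨Sc, hdec, hbound⟩ := hdecomp s hs.1 H hb
    by_cases hall : ∀ l : Fin n, ¬ (l < j) → Sc l = 0
    · exfalso
      apply hs.2
      refine ⟨Sc, ?_⟩
      funext t
      have h4 := hdec t
      rw [← Finset.sum_filter_add_sum_filter_not Finset.univ (fun l => l < j)
        (fun l => Sc l * Q t l)] at h4
      have h5 : ∑ l ∈ Finset.univ.filter (fun l => ¬ l < j), Sc l * Q t l = 0 := by
        apply Finset.sum_eq_zero
        intro l hl
        rw [hall l (Finset.mem_filter.mp hl).2, zero_mul]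
      rw [h5, add_zero] at h4
      exact h4
    · push_neg at hall
      obtain ⟨l, hlj, hSl⟩ := hall
      have hd : (Sc l).coeff (Sc l).natDegree ≠ 0 :=
        fun h => hSl (leadingCoeff_eq_zero.mp h)
      have h1 := hbound l _ hd
      have h2 : hhf n m (m ((j : ℕ) + 1) - 1) ≤ hhf n m (m ((l : ℕ) + 1) - 1) := by
        apply hhf_le_hhf hA hn
        have hml := m_mono_le hA (show (j : ℕ) + 1 ≤ (l : ℕ) + 1 by
          have := Fin.le_def.mp hlj
          omega) (by omega)
        omega
      rw [hvh j, hH]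
      have h3 : hhf n m (m ((j : ℕ) + 1) - 1) + n ≤ H := by omega
      exact_mod_cast h3
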